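/- Let ψ be a positive C² probability density with ψ'(x) ≠ 0 and bounded second derivative near x, θ > 0, and A_n = { ε : ψ(x + θε/√n) > ψ(x) }. Then lim_{n→∞} ( ∫_{A_n} φ(ε) dε + ∫_{A_n^c} (ψ(x + θε/√n)/ψ(x)) φ(ε) dε − 1 )·√n = −(θ/√(2π))·|ψ'(x)|/ψ(x). -/

import Mathlib

open MeasureTheory Filter
open Real Set

lemma aux_int_exp : Integrable (fun ε : ℝ => Real.exp (-ε^2/2)) := by
  have := integrable_exp_neg_mul_sq (b := (1/2:ℝ)) (by norm_num)
  convert this using 2 with ε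
  ring_nf

lemma aux_int_sq_exp : Integrable (fun ε : ℝ => ε^2 * Real.exp (-ε^2/2)) := by
  have := integrable_rpow_mul_exp_neg_mul_sq (b := (1/2:ℝ)) (by norm_num) (s := 2) (by norm_num)
  convert this using 2 with ε
  rw [show ((2:ℝ) = ((2:ℕ):ℝ)) by norm_num, Real.rpow_natCast]
  ring_nf

lemma aux_sqrt_ne : Real.sqrt (2*Real.pi) ≠ 0 :=
  ne_of_gt (Real.sqrt_pos.mpr (by positivity))

lemma aux_phi_integral : ∫ ε : ℝ, (Real.sqrt (2*Real.pi))⁻¹ * Real.exp (-ε^2/2) = 1 := by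
  rw [MeasureTheory.integral_const_mul]
  have h := integral_gaussian (1/2 : ℝ)
  have h2 : (π / (1/2 : ℝ)) = 2 * π := by ring
  rw [h2] at h
  have h3 : (fun ε : ℝ => Real.exp (-ε^2/2)) = fun x : ℝ => Real.exp (-(1/2:ℝ) * x^2) := by
    funext x; ring_nf
  rw [h3, h, inv_mul_cancel₀ aux_sqrt_ne]

lemma aux_int_mul_exp : Integrable (fun ε : ℝ => ε * Real.exp (-ε^2/2)) := by
  have := integrable_mul_exp_neg_mul_sq (b := (1/2:ℝ)) (by norm_num)
  convert this using 2 with ε; ring_nf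

lemma aux_Ioi : ∫ ε in Set.Ioi (0:ℝ), ε * Real.exp (-ε^2/2) = 1 := by
  have hderiv : ∀ ε ∈ Set.Ioi (0:ℝ), HasDerivAt (fun t : ℝ => -Real.exp (-t^2/2)) (ε * Real.exp (-ε^2/2)) ε := by
    intro ε _
    have h1 : HasDerivAt (fun t : ℝ => -t^2/2) (-ε) ε := by
      have := ((hasDerivAt_pow 2 ε).neg).div_const 2
      simpa using this.congr_deriv (by ring)
    have := (h1.exp).neg
    exact this.congr_deriv (by ring)
  have hcont : ContinuousWithinAt (fun t : ℝ => -Real.exp (-t^2/2)) (Set.Ici 0) 0 :=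
    (Continuous.continuousWithinAt (by continuity))
  have htend : Tendsto (fun t : ℝ => -Real.exp (-t^2/2)) atTop (nhds 0) := by
    rw [show (0:ℝ) = -0 by ring]
    apply Tendsto.neg
    have h : Tendsto (fun t:ℝ => t^2/2) atTop atTop :=
      (tendsto_pow_atTop two_ne_zero).atTop_div_const (by norm_num)
    have h2 : Tendsto (fun t:ℝ => -t^2/2) atTop atBot := by
      simpa [neg_div, Function.comp_def] using tendsto_neg_atTop_atBot.comp h
    simpa [Function.comp_def] using Real.tendsto_exp_atBot.comp h2
  have := integral_Ioi_of_hasDerivAt_of_tendsto hcont hderiv aux_int_mul_exp.integrableOn htend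
  simpa using this

lemma aux_Iio : ∫ ε in Set.Iio (0:ℝ), ε * Real.exp (-ε^2/2) = -1 := by
  rw [← integral_Iic_eq_integral_Iio]
  have h := integral_comp_neg_Iic (0:ℝ) (fun ε : ℝ => -(ε * Real.exp (-ε^2/2)))
  simp only [neg_zero] at h
  have h1 : (∫ x in Iic (0:ℝ), -(-x * Real.exp (-(-x)^2/2))) = ∫ x in Ioi (0:ℝ), -(x * Real.exp (-x^2/2)) := h
  have h2 : (fun x : ℝ => -(-x * Real.exp (-(-x)^2/2))) = fun x : ℝ => x * Real.exp (-x^2/2) := by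
    funext x; ring_nf
  rw [h2] at h1
  rw [h1, integral_neg, aux_Ioi]

lemma aux_sqrt_nat_atTop : Tendsto (fun n : ℕ => Real.sqrt n) atTop atTop := by
  have h := (tendsto_rpow_atTop (by norm_num : (0:ℝ) < 1/2)).comp
    (tendsto_natCast_atTop_atTop (R := ℝ))
  apply h.congr
  intro n
  simp [Function.comp_apply, Real.sqrt_eq_rpow]


set_option maxHeartbeats 2000000 in
/-- First-order asymptotics of the mean acceptance probability:
√n (∫_{A_n} φ + ∫_{A_n^c} (ψ(x+θε/√n)/ψ(x)) φ − 1) → −(θ/√(2π)) |ψ'(x)|/ψ(x). -/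
theorem stmt_6 (ψ : ℝ → ℝ) (x θ : ℝ) (φ : ℝ → ℝ)
    (hφ : φ = fun ε => (Real.sqrt (2 * Real.pi))⁻¹ * Real.exp (-ε ^ 2 / 2))
    (hψpos : ∀ y, 0 < ψ y) (hψC2 : ContDiff ℝ 2 ψ)
    (hψint : ∫ y, ψ y = 1)
    (hbdd : ∃ δ > (0:ℝ), ∃ M, ∀ y ∈ Set.Ioo (x - δ) (x + δ), |deriv (deriv ψ) y| ≤ M)
    (hd : deriv ψ x ≠ 0) (hθ : 0 < θ)
    (A : ℕ → Set ℝ)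
    (hA : ∀ n, A n = {ε : ℝ | ψ x < ψ (x + θ * ε / Real.sqrt n)}) :
    Tendsto (fun n : ℕ =>
        ((∫ ε in A n, φ ε) +
          (∫ ε in (A n)ᶜ, (ψ (x + θ * ε / Real.sqrt n) / ψ x) * φ ε) - 1) * Real.sqrt n)
      atTop (nhds (-(θ / Real.sqrt (2 * Real.pi)) * (|deriv ψ x| / ψ x))) := by
  obtain ⟨δ, hδ, M, hM⟩ := hbdd
  have hMnn : 0 ≤ M := le_trans (abs_nonneg _) (hM x ⟨by linarith, by linarith⟩)
  set d := deriv ψ x with hdd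
  set c := ψ x with hcc
  have hc : 0 < c := hψpos x
  have hψcont : Continuous ψ := hψC2.continuous
  have hdiff : Differentiable ℝ ψ := hψC2.differentiable (by norm_num)
  have hdiff' : Differentiable ℝ (deriv ψ) := by
    have h2 : ContDiff ℝ ((1:WithTop ℕ∞)+1) ψ := by norm_num; exact hψC2
    exact ((contDiff_succ_iff_deriv.mp h2).2.2).differentiable (by norm_num)
  have hφcont : Continuous φ := by rw [hφ]; continuity
  have hφnn : ∀ ε, 0 ≤ φ ε := by intro ε; rw [hφ]; positivity
  have hφint : Integrable φ := by rw [hφ]; exact aux_int_exp.const_mul _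
  have hφ1 : ∫ ε, φ ε = 1 := by rw [hφ]; exact aux_phi_integral
  have hmap : ∀ n : ℕ, Continuous (fun ε : ℝ => x + θ * ε / Real.sqrt n) := by
    intro n; exact continuous_const.add ((continuous_const.mul continuous_id).div_const _)
  have hmeasA : ∀ n, MeasurableSet (A n) := by
    intro n; rw [hA n]
    exact measurableSet_lt measurable_const (hψcont.comp (hmap n)).measurable
  set F : ℕ → ℝ → ℝ := fun n => ((A n)ᶜ).indicator
    (fun ε => Real.sqrt n * ((ψ (x + θ * ε / Real.sqrt n) - c) / c * φ ε)) with hF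
  set S : Set ℝ := {ε : ℝ | d * ε < 0} with hS
  set L : ℝ → ℝ := S.indicator (fun ε => θ * (d * ε) / c * φ ε) with hL
  set K : ℝ := (|d| * θ + θ * c / δ + M * θ ^ 2) / c with hK
  have hKnn : 0 ≤ K := by
    apply div_nonneg _ hc.le
    have h1 : 0 ≤ |d| * θ := mul_nonneg (abs_nonneg d) hθ.le
    have h2 : 0 ≤ θ * c / δ := by positivity
    have h3 : 0 ≤ M * θ ^ 2 := mul_nonneg hMnn (sq_nonneg θ)
    linarith
  set bound : ℝ → ℝ := fun ε => K * ((1 + 2 * ε ^ 2) * φ ε) with hbd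
  -- Step 1: rewrite the sequence
  have hrw : ∀ n : ℕ, ((∫ ε in A n, φ ε) +
      (∫ ε in (A n)ᶜ, (ψ (x + θ * ε / Real.sqrt n) / c) * φ ε) - 1) * Real.sqrt n
      = ∫ ε, F n ε := by
    intro n
    have hAc : MeasurableSet ((A n)ᶜ) := (hmeasA n).compl
    have h1 : ∫ ε in A n, φ ε = (∫ ε, φ ε) - ∫ ε in (A n)ᶜ, φ ε := by
      rw [← integral_add_compl (hmeasA n) hφint]; ring
    have hcont2 : Continuous (fun ε : ℝ => ψ (x + θ * ε / Real.sqrt n) / c * φ ε) := by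
      exact ((hψcont.comp (hmap n)).div_const c).mul hφcont
    have hint2 : IntegrableOn (fun ε => (ψ (x + θ * ε / Real.sqrt n) / c) * φ ε) ((A n)ᶜ) := by
      apply Integrable.mono' hφint.integrableOn hcont2.aestronglyMeasurable.restrict
      rw [ae_restrict_iff' hAc]
      filter_upwards with ε hε
      have hle : ψ (x + θ * ε / Real.sqrt n) ≤ c := by
        rw [hA n, Set.mem_compl_iff, Set.mem_setOf_eq, not_lt] at hε
        exact hε
      have hnn : 0 ≤ ψ (x + θ * ε / Real.sqrt n) / c * φ ε :=
        mul_nonneg (div_nonneg (hψpos _).le hc.le) (hφnn ε)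
      rw [Real.norm_eq_abs, abs_of_nonneg hnn]
      calc ψ (x + θ * ε / Real.sqrt n) / c * φ ε ≤ 1 * φ ε := by
            apply mul_le_mul_of_nonneg_right _ (hφnn ε)
            rw [div_le_one hc]; exact hle
        _ = φ ε := one_mul _
    have h4 : ∫ ε in (A n)ᶜ, ((ψ (x + θ * ε / Real.sqrt n) / c) * φ ε - φ ε)
        = ∫ ε in (A n)ᶜ, (ψ (x + θ * ε / Real.sqrt n) - c) / c * φ ε := by
      apply integral_congr_ae
      filter_upwards with ε
      field_simp
    rw [h1, hφ1, hF]
    rw [integral_indicator hAc, MeasureTheory.integral_const_mul, ← h4,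
      integral_sub hint2 hφint.integrableOn]
    ring
  -- Step 2: Taylor estimate
  have taylor : ∀ h : ℝ, |h| < δ → |ψ (x + h) - c - d * h| ≤ M * h ^ 2 := by
    intro h hh
    have habs := abs_nonneg h
    have hsub : Set.Icc (x - |h|) (x + |h|) ⊆ Set.Ioo (x - δ) (x + δ) := by
      intro y hy
      exact ⟨by linarith [hy.1], by linarith [hy.2]⟩
    have hxmem : x ∈ Set.Icc (x - |h|) (x + |h|) := ⟨by linarith, by linarith⟩
    have hxh : x + h ∈ Set.Icc (x - |h|) (x + |h|) :=
      ⟨by linarith [neg_abs_le h], by linarith [le_abs_self h]⟩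
    have hstep1 : ∀ y ∈ Set.Icc (x - |h|) (x + |h|), ‖deriv ψ y - d‖ ≤ M * |h| := by
      intro y hy
      have h1 := Convex.norm_image_sub_le_of_norm_hasDerivWithin_le
        (f := deriv ψ) (f' := fun z => deriv (deriv ψ) z)
        (s := Set.Icc (x - |h|) (x + |h|)) (C := M)
        (fun z _ => (hdiff' z).hasDerivAt.hasDerivWithinAt)
        (fun z hz => by rw [Real.norm_eq_abs]; exact hM z (hsub hz))
        (convex_Icc _ _) hxmem hy
      calc ‖deriv ψ y - d‖ ≤ M * ‖y - x‖ := h1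
        _ ≤ M * |h| := by
            apply mul_le_mul_of_nonneg_left _ hMnn
            rw [Real.norm_eq_abs, abs_le]
            exact ⟨by linarith [hy.1], by linarith [hy.2]⟩
    have h2 := Convex.norm_image_sub_le_of_norm_hasDerivWithin_le
      (f := fun y => ψ y - d * y) (f' := fun y => deriv ψ y - d)
      (s := Set.Icc (x - |h|) (x + |h|)) (C := M * |h|)
      (fun z _ => by
        have hdz : HasDerivAt (fun y : ℝ => d * y) d z := by
          simpa using (hasDerivAt_id z).const_mul d
        exact ((hdiff z).hasDerivAt.sub hdz).hasDerivWithinAt)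
      hstep1 (convex_Icc _ _) hxmem hxh
    have h3 : ψ (x + h) - d * (x + h) - (ψ x - d * x) = ψ (x + h) - c - d * h := by
      rw [← hcc]; ring
    rw [Real.norm_eq_abs, Real.norm_eq_abs] at h2
    rw [h3] at h2
    calc |ψ (x + h) - c - d * h| ≤ M * |h| * |x + h - x| := h2
      _ = M * h ^ 2 := by rw [show x + h - x = h by ring, mul_assoc, abs_mul_abs_self]; ring
  -- Step 3: slope convergence
  have slope_lim : ∀ ε : ℝ, ε ≠ 0 →
      Tendsto (fun n : ℕ => Real.sqrt n * (ψ (x + θ * ε / Real.sqrt n) - c)) atTop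
        (nhds (d * (θ * ε))) := by
    intro ε hε
    have hθε : θ * ε ≠ 0 := mul_ne_zero hθ.ne' hε
    have hs : Tendsto (fun n : ℕ => Real.sqrt n) atTop atTop := aux_sqrt_nat_atTop
    have hinv : Tendsto (fun n : ℕ => θ * ε / Real.sqrt n) atTop (nhds 0) := by
      have := hs.inv_tendsto_atTop.const_mul (θ * ε)
      simpa [div_eq_mul_inv] using this
    have hx1 : Tendsto (fun n : ℕ => x + θ * ε / Real.sqrt n) atTop (nhds x) := by
      simpa using tendsto_const_nhds.add hinv
    have hx2 : Tendsto (fun n : ℕ => x + θ * ε / Real.sqrt n) atTop (nhdsWithin x {x}ᶜ) := by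
      apply tendsto_nhdsWithin_of_tendsto_nhds_of_eventually_within _ hx1
      filter_upwards [eventually_ge_atTop 1] with n hn
      have hs0 : (0:ℝ) < Real.sqrt n :=
        Real.sqrt_pos.mpr (by exact_mod_cast Nat.lt_of_lt_of_le Nat.zero_lt_one hn)
      have : θ * ε / Real.sqrt n ≠ 0 := div_ne_zero hθε hs0.ne'
      simp [this]
    have hslope := hasDerivAt_iff_tendsto_slope.mp (hdiff x).hasDerivAt
    have h1 := (hslope.comp hx2).const_mul (θ * ε)
    rw [show d * (θ * ε) = (θ * ε) * deriv ψ x by rw [← hdd]; ring]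
    apply Tendsto.congr' _ h1
    filter_upwards [eventually_ge_atTop 1] with n hn
    have hs0 : (0:ℝ) < Real.sqrt n :=
      Real.sqrt_pos.mpr (by exact_mod_cast Nat.lt_of_lt_of_le Nat.zero_lt_one hn)
    simp only [Function.comp_apply, slope_def_field]
    rw [← hcc, show x + θ * ε / Real.sqrt n - x = θ * ε / Real.sqrt n by ring]
    generalize ψ (x + θ * ε / Real.sqrt n) - c = y
    field_simp
  -- Step 4: measurability
  have hmeasF : ∀ n, AEStronglyMeasurable (F n) volume := by
    intro n
    apply AEStronglyMeasurable.indicator _ (hmeasA n).compl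
    have hcont3 : Continuous (fun ε : ℝ =>
        Real.sqrt n * ((ψ (x + θ * ε / Real.sqrt n) - c) / c * φ ε)) := by
      exact continuous_const.mul ((((hψcont.comp (hmap n)).sub continuous_const).div_const c).mul
        hφcont)
    exact hcont3.aestronglyMeasurable
  -- Step 5: integrable bound
  have hbound_int : Integrable bound := by
    rw [hbd]
    apply Integrable.const_mul
    have h1 : Integrable (fun ε : ℝ => φ ε + 2 * (ε ^ 2 * φ ε)) := by
      apply hφint.add
      apply Integrable.const_mul
      have h2 : Integrable (fun ε : ℝ => (Real.sqrt (2 * Real.pi))⁻¹ * (ε ^ 2 * Real.exp (-ε ^ 2 / 2))) :=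
        aux_int_sq_exp.const_mul _
      apply h2.congr
      filter_upwards with ε
      rw [hφ]; ring
    apply h1.congr
    filter_upwards with ε
    ring
  -- Step 6: domination
  have hest : ∀ s ε : ℝ, (s = 0 ∨ 1 ≤ s) → ψ (x + θ * ε / s) ≤ c →
      s * |ψ (x + θ * ε / s) - c| ≤ K * c * (1 + 2 * ε ^ 2) := by
    intro s ε hcase hle
    have hKcnn : 0 ≤ K * c * (1 + 2 * ε ^ 2) :=
      mul_nonneg (mul_nonneg hKnn hc.le) (by positivity)
    rcases hcase with h0 | hs1
    · rw [h0, zero_mul]; exact hKcnn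
    have hs0 : 0 < s := lt_of_lt_of_le one_pos hs1
    have hsnn : 0 ≤ s := hs0.le
    have hmain : s * |ψ (x + θ * ε / s) - c|
        ≤ |d| * θ * |ε| + θ * c / δ * |ε| + M * θ ^ 2 * ε ^ 2 := by
      by_cases hsmall : |θ * ε / s| < δ
      · have htay := taylor (θ * ε / s) hsmall
        have htri : |ψ (x + θ * ε / s) - c| ≤ M * (θ * ε / s) ^ 2 + |d * (θ * ε / s)| := by
          have h9 := abs_sub_abs_le_abs_sub (ψ (x + θ * ε / s) - c) (d * (θ * ε / s))
          linarith [h9, htay]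
        have e1 : s * (θ * ε / s) ^ 2 = θ ^ 2 * ε ^ 2 / s := by
          field_simp
        have e2 : s * |d * (θ * ε / s)| = |d| * θ * |ε| := by
          rw [abs_mul, abs_div, abs_mul, abs_of_pos hθ, abs_of_pos hs0]
          field_simp
        have e3 : θ ^ 2 * ε ^ 2 / s ≤ θ ^ 2 * ε ^ 2 := div_le_self (by positivity) hs1
        have e4 : 0 ≤ θ * c / δ * |ε| := by positivity
        have e5 : s * |ψ (x + θ * ε / s) - c| ≤ s * (M * (θ * ε / s) ^ 2 + |d * (θ * ε / s)|) :=
          mul_le_mul_of_nonneg_left htri hsnn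
        have e6 : s * (M * (θ * ε / s) ^ 2 + |d * (θ * ε / s)|)
            = M * (θ ^ 2 * ε ^ 2 / s) + |d| * θ * |ε| := by
          rw [mul_add, ← e2, show s * (M * (θ * ε / s) ^ 2) = M * (s * (θ * ε / s) ^ 2) by ring, e1]
        have e7 : M * (θ ^ 2 * ε ^ 2 / s) ≤ M * (θ ^ 2 * ε ^ 2) :=
          mul_le_mul_of_nonneg_left e3 hMnn
        linarith [e5, e6, e7, e4]
      · push_neg at hsmall
        have habsh : |θ * ε / s| = θ * |ε| / s := by
          rw [abs_div, abs_mul, abs_of_pos hθ, abs_of_pos hs0]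
        have hsle : s ≤ θ * |ε| / δ := by
          rw [habsh] at hsmall
          rw [le_div_iff₀ hδ]
          calc s * δ ≤ s * (θ * |ε| / s) := mul_le_mul_of_nonneg_left hsmall hsnn
            _ = θ * |ε| := by field_simp
        have hΔle : |ψ (x + θ * ε / s) - c| ≤ c := by
          rw [abs_le]
          constructor
          · have := hψpos (x + θ * ε / s); linarith
          · linarith
        have e1 : s * |ψ (x + θ * ε / s) - c| ≤ (θ * |ε| / δ) * c := by
          calc s * |ψ (x + θ * ε / s) - c| ≤ s * c := mul_le_mul_of_nonneg_left hΔle hsnn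
            _ ≤ (θ * |ε| / δ) * c := mul_le_mul_of_nonneg_right hsle hc.le
        have e2 : (θ * |ε| / δ) * c = θ * c / δ * |ε| := by ring
        have e3 : 0 ≤ |d| * θ * |ε| := by positivity
        have e4 : 0 ≤ M * θ ^ 2 * ε ^ 2 := by positivity
        linarith [e1, e2, e3, e4]
    have hKc : K * c = |d| * θ + θ * c / δ + M * θ ^ 2 := by
      rw [hK, div_mul_cancel₀ _ hc.ne']
    rw [hKc]
    have hab : |ε| ≤ 1 + 2 * ε ^ 2 := by nlinarith [sq_nonneg (|ε| - 1), sq_abs ε, sq_nonneg ε]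
    have h1 : 0 ≤ |d| * θ := mul_nonneg (abs_nonneg d) hθ.le
    have h2 : 0 ≤ θ * c / δ := by positivity
    have h3 : 0 ≤ M * θ ^ 2 := mul_nonneg hMnn (sq_nonneg θ)
    have p1 : |d| * θ * |ε| ≤ |d| * θ * (1 + 2 * ε ^ 2) := mul_le_mul_of_nonneg_left hab h1
    have p2 : θ * c / δ * |ε| ≤ θ * c / δ * (1 + 2 * ε ^ 2) := mul_le_mul_of_nonneg_left hab h2
    have p3 : M * θ ^ 2 * ε ^ 2 ≤ M * θ ^ 2 * (1 + 2 * ε ^ 2) := by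
      apply mul_le_mul_of_nonneg_left _ h3
      nlinarith [sq_nonneg ε]
    nlinarith [hmain, p1, p2, p3]
  have hbound : ∀ n : ℕ, ∀ᵐ ε : ℝ, ‖F n ε‖ ≤ bound ε := by
    intro n
    apply Filter.Eventually.of_forall
    intro ε
    have hbnn : 0 ≤ bound ε := by
      apply mul_nonneg hKnn (mul_nonneg (by positivity) (hφnn ε))
    by_cases hε : ε ∈ (A n)ᶜ
    swap
    · simp only [hF, Set.indicator_of_notMem hε]; simpa using hbnn
    · have hle : ψ (x + θ * ε / Real.sqrt n) ≤ c := by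
        have := hε
        rw [hA n, Set.mem_compl_iff, Set.mem_setOf_eq, not_lt] at this
        exact this
      simp only [hF, Set.indicator_of_mem hε]
      have hcase : Real.sqrt (n:ℝ) = 0 ∨ 1 ≤ Real.sqrt (n:ℝ) := by
        rcases Nat.eq_zero_or_pos n with h0 | h1
        · left; rw [h0]; simp
        · right
          rw [show (1:ℝ) = Real.sqrt 1 by simp]
          apply Real.sqrt_le_sqrt
          exact_mod_cast h1
      have hmain2 := hest (Real.sqrt n) ε hcase hle
      have hsnn : (0:ℝ) ≤ Real.sqrt n := Real.sqrt_nonneg _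
      have habsF : |Real.sqrt n * ((ψ (x + θ * ε / Real.sqrt n) - c) / c * φ ε)|
          = Real.sqrt n * |ψ (x + θ * ε / Real.sqrt n) - c| / c * φ ε := by
        rw [abs_mul, abs_mul, abs_div, abs_of_nonneg hsnn, abs_of_pos hc,
          abs_of_nonneg (hφnn ε)]
        ring
      rw [Real.norm_eq_abs, habsF]
      simp only [hbd]
      have h6 : Real.sqrt n * |ψ (x + θ * ε / Real.sqrt n) - c| / c ≤ K * (1 + 2 * ε ^ 2) := by
        rw [div_le_iff₀ hc]
        calc Real.sqrt n * |ψ (x + θ * ε / Real.sqrt n) - c| ≤ K * c * (1 + 2 * ε ^ 2) := hmain2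
          _ = K * (1 + 2 * ε ^ 2) * c := by ring
      calc Real.sqrt (n:ℝ) * |ψ (x + θ * ε / Real.sqrt n) - c| / c * φ ε
          ≤ K * (1 + 2 * ε ^ 2) * φ ε := mul_le_mul_of_nonneg_right h6 (hφnn ε)
        _ = K * ((1 + 2 * ε ^ 2) * φ ε) := by ring
  -- Step 7: pointwise limit
  have hlim : ∀ᵐ ε : ℝ, Tendsto (fun n : ℕ => F n ε) atTop (nhds (L ε)) := by
    have h0 : ∀ᵐ ε : ℝ, ε ≠ 0 := by
      have : (volume : Measure ℝ) {0} = 0 := measure_singleton 0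
      filter_upwards [compl_mem_ae_iff.mpr this] with ε hε
      simpa using hε
    filter_upwards [h0] with ε hε
    have hθd : d * (θ * ε) ≠ 0 := mul_ne_zero hd (mul_ne_zero hθ.ne' hε)
    rcases hθd.lt_or_gt with hneg | hpos
    · -- limit is the nonzero branch
      have hmemS : ε ∈ S := by
        simp only [hS, Set.mem_setOf_eq]
        nlinarith
      have hev : ∀ᶠ n : ℕ in atTop, ε ∈ (A n)ᶜ := by
        have h1 := (slope_lim ε hε).eventually (eventually_lt_nhds hneg)
        filter_upwards [h1, eventually_ge_atTop 1] with n h1n hn1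
        rw [hA n, Set.mem_compl_iff, Set.mem_setOf_eq, not_lt]
        have hs0 : (0:ℝ) < Real.sqrt n :=
          Real.sqrt_pos.mpr (by exact_mod_cast Nat.lt_of_lt_of_le Nat.zero_lt_one hn1)
        nlinarith [Real.sqrt_nonneg (n:ℝ)]
      have hLval : L ε = d * (θ * ε) / c * φ ε := by
        simp only [hL, Set.indicator_of_mem hmemS]; ring
      rw [hLval]
      have h2 := ((slope_lim ε hε).div_const c).mul_const (φ ε)
      apply Tendsto.congr' _ h2
      filter_upwards [hev] with n hn
      simp only [hF, Set.indicator_of_mem hn]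
      ring
    · have hnotS : ε ∉ S := by
        rw [hS, Set.mem_setOf_eq, not_lt]
        nlinarith
      have hev : ∀ᶠ n : ℕ in atTop, ε ∈ A n := by
        have h1 := (slope_lim ε hε).eventually (eventually_gt_nhds hpos)
        filter_upwards [h1, eventually_ge_atTop 1] with n h1n hn1
        rw [hA n, Set.mem_setOf_eq]
        have hs0 : (0:ℝ) < Real.sqrt n :=
          Real.sqrt_pos.mpr (by exact_mod_cast Nat.lt_of_lt_of_le Nat.zero_lt_one hn1)
        nlinarith [Real.sqrt_nonneg (n:ℝ)]
      have hLval : L ε = 0 := by simp only [hL, Set.indicator_of_notMem hnotS]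
      rw [hLval]
      apply Tendsto.congr' _ tendsto_const_nhds
      filter_upwards [hev] with n hn
      simp only [hF, Set.indicator_of_notMem (Set.notMem_compl_iff.mpr hn)]
  -- Step 8: value of limit integral
  have hSmeas : MeasurableSet S := by
    simp only [hS]
    exact measurableSet_lt (measurable_id.const_mul d) measurable_const
  have hLint : ∫ ε, L ε = -(θ / Real.sqrt (2 * Real.pi)) * (|d| / c) := by
    simp only [hL]
    rw [integral_indicator hSmeas]
    rcases hd.lt_or_gt with hneg | hpos
    · have hSeq : S = Set.Ioi 0 := by
        simp only [hS]
        ext ε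
        simp only [Set.mem_setOf_eq, Set.mem_Ioi]
        constructor
        · intro h1; by_contra h2; push_neg at h2; nlinarith
        · intro h1; exact mul_neg_of_neg_of_pos hneg h1
      rw [hSeq]
      have hfun : (fun ε : ℝ => θ * (d * ε) / c * φ ε)
          = fun ε : ℝ => (θ * d / c * (Real.sqrt (2 * Real.pi))⁻¹) * (ε * Real.exp (-ε ^ 2 / 2)) := by
        funext ε; rw [hφ]; ring
      rw [hfun, MeasureTheory.integral_const_mul, aux_Ioi, abs_of_neg hneg]
      field_simp
    · have hSeq : S = Set.Iio 0 := by
        simp only [hS]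
        ext ε
        simp only [Set.mem_setOf_eq, Set.mem_Iio]
        constructor
        · intro h1; by_contra h2; push_neg at h2; nlinarith
        · intro h1; exact mul_neg_of_pos_of_neg hpos h1
      rw [hSeq]
      have hfun : (fun ε : ℝ => θ * (d * ε) / c * φ ε)
          = fun ε : ℝ => (θ * d / c * (Real.sqrt (2 * Real.pi))⁻¹) * (ε * Real.exp (-ε ^ 2 / 2)) := by
        funext ε; rw [hφ]; ring
      rw [hfun, MeasureTheory.integral_const_mul, aux_Iio, abs_of_pos hpos]
      field_simp
  -- conclude
  have hDCT := tendsto_integral_of_dominated_convergence bound hmeasF hbound_int hbound hlim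
  have hfe : (fun n : ℕ => ((∫ ε in A n, φ ε) +
      (∫ ε in (A n)ᶜ, (ψ (x + θ * ε / Real.sqrt n) / c) * φ ε) - 1) * Real.sqrt n)
      = fun n : ℕ => ∫ ε, F n ε := funext hrw
  rw [hfe, ← hLint]
  exact hDCT
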